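/- In a finite binary-action supermodular game, for every configuration x, the configuration f⁻(f⁺(x)) is a Nash equilibrium; moreover it is the greatest Nash equilibrium reachable from x by an improvement path. Symmetrically, f⁺(f⁻(x)) is the least Nash equilibrium reachable from x by an improvement path. -/

import Mathlib

variable {V : Type*} [Fintype V] [DecidableEq V]

/-- A configuration assigns each player an action in `{-1, +1}` (as integers). -/
def Conf (x : V → ℤ) : Prop := ∀ i, x i = 1 ∨ x i = -1

/-- Supermodularity (increasing differences) for a binary-action game with
utilities `u`. -/
def Supermodular (u : V → (V → ℤ) → ℝ) : Prop :=
  ∀ (i : V) (x y : V → ℤ), Conf x → Conf y → (∀ j, j ≠ i → y j ≤ x j) →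
    u i (Function.update y i 1) - u i (Function.update y i (-1)) ≤
      u i (Function.update x i 1) - u i (Function.update x i (-1))

/-- One step of an improvement path: a single player flips her action and
strictly increases her utility. -/
def ImpStep (u : V → (V → ℤ) → ℝ) (x y : V → ℤ) : Prop :=
  ∃ i : V, y = Function.update x i (-(x i)) ∧ u i x < u i y

/-- A monotone improvement step (the active player switches from -1 to +1). -/
def MonStep (u : V → (V → ℤ) → ℝ) (x y : V → ℤ) : Prop :=
  ImpStep u x y ∧ x ≤ y

/-- An anti-monotone improvement step (the active player switches from +1 to -1). -/
def AntiStep (u : V → (V → ℤ) → ℝ) (x y : V → ℤ) : Prop :=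
  ImpStep u x y ∧ y ≤ x

/-- `y` is reachable from `x` by an improvement path. -/
def ImpReach (u : V → (V → ℤ) → ℝ) : (V → ℤ) → (V → ℤ) → Prop :=
  Relation.ReflTransGen (ImpStep u)

/-- `y` is reachable from `x` by a monotone improvement path. -/
def MonReach (u : V → (V → ℤ) → ℝ) : (V → ℤ) → (V → ℤ) → Prop :=
  Relation.ReflTransGen (MonStep u)

/-- `y` is reachable from `x` by an anti-monotone improvement path. -/
def AntiReach (u : V → (V → ℤ) → ℝ) : (V → ℤ) → (V → ℤ) → Prop :=
  Relation.ReflTransGen (AntiStep u)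

/-- `x` is a (pure strategy Nash) equilibrium: no unilateral flip strictly
improves the deviator's utility. -/
def IsNash (u : V → (V → ℤ) → ℝ) (x : V → ℤ) : Prop :=
  ∀ i : V, u i (Function.update x i (-(x i))) ≤ u i x

open Classical in
/-- `fplus u x` is the componentwise supremum of the set of configurations
reachable from `x` by monotone improvement paths. -/
noncomputable def fplus (u : V → (V → ℤ) → ℝ) (x : V → ℤ) : V → ℤ :=
  fun i => if ∃ y, MonReach u x y ∧ y i = 1 then 1 else -1

open Classical in
/-- `fminus u x` is the componentwise infimum of the set of configurations
reachable from `x` by anti-monotone improvement paths. -/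
noncomputable def fminus (u : V → (V → ℤ) → ℝ) (x : V → ℤ) : V → ℤ :=
  fun i => if ∃ y, AntiReach u x y ∧ y i = -1 then -1 else 1

set_option linter.unusedSectionVars false

/- ============ auxiliary development ============ -/

section Aux

variable {u : V → (V → ℤ) → ℝ}

lemma conf_update {x : V → ℤ} (hx : Conf x) {i : V} {c : ℤ} (hc : c = 1 ∨ c = -1) :
    Conf (Function.update x i c) := by
  intro j
  by_cases h : j = i
  · subst h; simpa using hc
  · simpa [Function.update_of_ne h] using hx j

lemma update_eq_self_of_eq {x : V → ℤ} {i : V} {c : ℤ} (h : x i = c) :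
    Function.update x i c = x := by
  rw [← h]; exact Function.update_eq_self i x

lemma conf_impStep {x y : V → ℤ} (hx : Conf x) (h : ImpStep u x y) : Conf y := by
  obtain ⟨i, hy, -⟩ := h
  subst hy
  refine conf_update hx ?_
  rcases hx i with h1 | h1 <;> rw [h1] <;> norm_num

lemma conf_impReach {x y : V → ℤ} (hx : Conf x) (h : ImpReach u x y) : Conf y := by
  induction h with
  | refl => exact hx
  | tail _ hstep ih => exact conf_impStep ih hstep

lemma conf_monReach {x y : V → ℤ} (hx : Conf x) (h : MonReach u x y) : Conf y :=
  conf_impReach hx (Relation.ReflTransGen.mono (fun _ _ h => h.1) _ _ h)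

lemma conf_antiReach {x y : V → ℤ} (hx : Conf x) (h : AntiReach u x y) : Conf y :=
  conf_impReach hx (Relation.ReflTransGen.mono (fun _ _ h => h.1) _ _ h)

lemma monReach_impReach {x y : V → ℤ} (h : MonReach u x y) : ImpReach u x y :=
  Relation.ReflTransGen.mono (fun _ _ h => h.1) _ _ h

lemma antiReach_impReach {x y : V → ℤ} (h : AntiReach u x y) : ImpReach u x y :=
  Relation.ReflTransGen.mono (fun _ _ h => h.1) _ _ h

lemma monReach_le {x y : V → ℤ} (h : MonReach u x y) : x ≤ y := by
  induction h with
  | refl => exact le_refl _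
  | tail _ hstep ih => exact le_trans ih hstep.2

lemma antiReach_le {x y : V → ℤ} (h : AntiReach u x y) : y ≤ x := by
  induction h with
  | refl => exact le_refl _
  | tail _ hstep ih => exact le_trans hstep.2 ih

lemma monStep_elim {x y : V → ℤ} (hx : Conf x) (h : MonStep u x y) :
    ∃ i, x i = -1 ∧ y = Function.update x i 1 ∧
      u i (Function.update x i (-1)) < u i (Function.update x i 1) := by
  obtain ⟨⟨i, hy, hlt⟩, hle⟩ := h
  rcases hx i with h1 | h1
  · exfalso
    have := hle i
    rw [hy, h1] at this
    simp at this
  · refine ⟨i, h1, ?_, ?_⟩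
    · rw [hy, h1]; norm_num
    · rw [update_eq_self_of_eq h1]
      rw [hy, h1] at hlt
      simpa using hlt

lemma antiStep_elim {x y : V → ℤ} (hx : Conf x) (h : AntiStep u x y) :
    ∃ i, x i = 1 ∧ y = Function.update x i (-1) ∧
      u i (Function.update x i 1) < u i (Function.update x i (-1)) := by
  obtain ⟨⟨i, hy, hlt⟩, hle⟩ := h
  rcases hx i with h1 | h1
  · refine ⟨i, h1, ?_, ?_⟩
    · rw [hy, h1]
    · rw [update_eq_self_of_eq h1]
      rw [hy, h1] at hlt
      exact hlt
  · exfalso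
    have := hle i
    rw [hy, h1] at this
    simp at this

lemma monStep_intro {x : V → ℤ} {i : V} (hxi : x i = -1)
    (hlt : u i (Function.update x i (-1)) < u i (Function.update x i 1)) :
    MonStep u x (Function.update x i 1) := by
  constructor
  · refine ⟨i, by rw [hxi]; norm_num, ?_⟩
    calc u i x = u i (Function.update x i (-1)) := by rw [update_eq_self_of_eq hxi]
    _ < _ := hlt
  · intro j
    by_cases h : j = i
    · subst h; simp [hxi]
    · simp [Function.update_of_ne h]

lemma antiStep_intro {x : V → ℤ} {i : V} (hxi : x i = 1)
    (hlt : u i (Function.update x i 1) < u i (Function.update x i (-1))) :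
    AntiStep u x (Function.update x i (-1)) := by
  constructor
  · refine ⟨i, by rw [hxi], ?_⟩
    calc u i x = u i (Function.update x i 1) := by rw [update_eq_self_of_eq hxi]
    _ < _ := hlt
  · intro j
    by_cases h : j = i
    · subst h; simp [hxi]
    · simp [Function.update_of_ne h]


lemma sup_up (hsm : Supermodular u) {w w' : V → ℤ} {i : V} (hw : Conf w) (hw' : Conf w')
    (hle : ∀ j, j ≠ i → w j ≤ w' j)
    (h : u i (Function.update w i (-1)) < u i (Function.update w i 1)) :
    u i (Function.update w' i (-1)) < u i (Function.update w' i 1) := by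
  have := hsm i w' w hw' hw hle
  linarith

lemma sup_down (hsm : Supermodular u) {w w' : V → ℤ} {i : V} (hw : Conf w) (hw' : Conf w')
    (hle : ∀ j, j ≠ i → w' j ≤ w j)
    (h : u i (Function.update w i 1) < u i (Function.update w i (-1))) :
    u i (Function.update w' i 1) < u i (Function.update w' i (-1)) := by
  have := hsm i w w' hw hw' hle
  linarith

lemma mon_join (hsm : Supermodular u) {x z : V → ℤ} (hxz : MonReach u x z) :
    ∀ {y : V → ℤ}, Conf x → Conf y → x ≤ y →
      MonReach u y (fun i => max (y i) (z i)) := by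
  induction hxz using Relation.ReflTransGen.head_induction_on with
  | refl =>
    intro y _ _ hxy
    have : (fun i => max (y i) (z i)) = y := funext fun i => max_eq_left (hxy i)
    rw [this]
    exact Relation.ReflTransGen.refl
  | @head a c h' h ih =>
    intro y ha hy hay
    obtain ⟨i, hai, hc, hlt⟩ := monStep_elim ha h'
    have hcConf : Conf c := hc ▸ conf_update ha (Or.inl rfl)
    have hzc : c ≤ z := monReach_le h
    have hzi : z i = 1 := by
      have h1 : (1:ℤ) ≤ z i := by have := hzc i; rwa [hc, Function.update_self] at this
      rcases conf_monReach hcConf h i with h2 | h2 <;> omega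
    by_cases hyi : y i = 1
    · have hcy : c ≤ y := by
        intro j
        by_cases hj : j = i
        · subst hj; rw [hc, Function.update_self, hyi]
        · rw [hc, Function.update_of_ne hj]; exact hay j
      exact ih hcConf hy hcy
    · have hyi' : y i = -1 := (hy i).resolve_left hyi
      have hlt' := sup_up hsm ha hy (fun j _ => hay j) hlt
      have hstep := monStep_intro hyi' hlt'
      set y' := Function.update y i 1 with hy'
      have hy'C : Conf y' := conf_update hy (Or.inl rfl)
      have hcy' : c ≤ y' := by
        intro j
        by_cases hj : j = i
        · subst hj; rw [hc, hy', Function.update_self, Function.update_self]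
        · rw [hc, hy', Function.update_of_ne hj, Function.update_of_ne hj]; exact hay j
      have htail := ih hcConf hy'C hcy'
      have heq : (fun j => max (y' j) (z j)) = (fun j => max (y j) (z j)) := by
        funext j
        by_cases hj : j = i
        · subst hj; rw [hy', Function.update_self, hzi, hyi']; decide
        · rw [hy', Function.update_of_ne hj]
      rw [heq] at htail
      exact htail.head hstep

lemma anti_meet (hsm : Supermodular u) {x z : V → ℤ} (hxz : AntiReach u x z) :
    ∀ {y : V → ℤ}, Conf x → Conf y → y ≤ x →
      AntiReach u y (fun i => min (y i) (z i)) := by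
  induction hxz using Relation.ReflTransGen.head_induction_on with
  | refl =>
    intro y _ _ hxy
    have : (fun i => min (y i) (z i)) = y := funext fun i => min_eq_left (hxy i)
    rw [this]
    exact Relation.ReflTransGen.refl
  | @head a c h' h ih =>
    intro y ha hy hay
    obtain ⟨i, hai, hc, hlt⟩ := antiStep_elim ha h'
    have hcConf : Conf c := hc ▸ conf_update ha (Or.inr rfl)
    have hzc : z ≤ c := antiReach_le h
    have hzi : z i = -1 := by
      have h1 : z i ≤ -1 := by have := hzc i; rwa [hc, Function.update_self] at this
      rcases conf_antiReach hcConf h i with h2 | h2 <;> omega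
    by_cases hyi : y i = -1
    · have hcy : y ≤ c := by
        intro j
        by_cases hj : j = i
        · subst hj; rw [hc, Function.update_self, hyi]
        · rw [hc, Function.update_of_ne hj]; exact hay j
      exact ih hcConf hy hcy
    · have hyi' : y i = 1 := (hy i).resolve_right hyi
      have hlt' := sup_down hsm ha hy (fun j _ => hay j) hlt
      have hstep := antiStep_intro hyi' hlt'
      set y' := Function.update y i (-1) with hy'
      have hy'C : Conf y' := conf_update hy (Or.inr rfl)
      have hcy' : y' ≤ c := by
        intro j
        by_cases hj : j = i
        · subst hj; rw [hc, hy', Function.update_self, Function.update_self]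
        · rw [hc, hy', Function.update_of_ne hj, Function.update_of_ne hj]; exact hay j
      have htail := ih hcConf hy'C hcy'
      have heq : (fun j => min (y' j) (z j)) = (fun j => min (y j) (z j)) := by
        funext j
        by_cases hj : j = i
        · subst hj; rw [hy', Function.update_self, hzi, hyi']; decide
        · rw [hy', Function.update_of_ne hj]
      rw [heq] at htail
      exact htail.head hstep


lemma fplus_conf (u : V → (V → ℤ) → ℝ) (x : V → ℤ) : Conf (fplus u x) := by
  intro i
  unfold fplus
  split <;> simp

lemma fminus_conf (u : V → (V → ℤ) → ℝ) (x : V → ℤ) : Conf (fminus u x) := by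
  intro i
  unfold fminus
  split <;> simp

lemma le_fplus {x y : V → ℤ} (hy : Conf y) (h : MonReach u x y) : y ≤ fplus u x := by
  intro i
  show y i ≤ fplus u x i
  by_cases h' : ∃ z, MonReach u x z ∧ z i = 1
  · have : fplus u x i = 1 := by simp only [fplus, if_pos h']
    rcases hy i with h1 | h1 <;> omega
  · have : fplus u x i = -1 := by simp only [fplus, if_neg h']
    push_neg at h'
    have h2 := h' y h
    rcases hy i with h1 | h1
    · exact absurd h1 h2
    · omega

lemma fminus_le {x y : V → ℤ} (hy : Conf y) (h : AntiReach u x y) : fminus u x ≤ y := by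
  intro i
  show fminus u x i ≤ y i
  by_cases h' : ∃ z, AntiReach u x z ∧ z i = -1
  · have : fminus u x i = -1 := by simp only [fminus, if_pos h']
    rcases hy i with h1 | h1 <;> omega
  · have : fminus u x i = 1 := by simp only [fminus, if_neg h']
    push_neg at h'
    have h2 := h' y h
    rcases hy i with h1 | h1
    · omega
    · exact absurd h1 h2

lemma reach_fplus (hsm : Supermodular u) {x : V → ℤ} (hx : Conf x) :
    MonReach u x (fplus u x) := by
  classical
  suffices H : ∀ n (y : V → ℤ), Conf y → MonReach u x y →
      (Finset.univ.filter (fun i => y i = -1 ∧ fplus u x i = 1)).card ≤ n →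
      MonReach u x (fplus u x) by
    exact H (Finset.univ.filter (fun i => x i = -1 ∧ fplus u x i = 1)).card x hx
      Relation.ReflTransGen.refl le_rfl
  intro n
  induction n with
  | zero =>
    intro y hy hreach hcard
    have hyub := le_fplus (u := u) hy hreach
    have : y = fplus u x := by
      funext i
      rcases hy i with h1 | h1
      · have h3 : y i ≤ fplus u x i := hyub i
        rcases fplus_conf u x i with h2 | h2 <;> omega
      · by_contra hne
        rcases fplus_conf u x i with h2 | h2
        · have : i ∈ Finset.univ.filter (fun i => y i = -1 ∧ fplus u x i = 1) := by
            simp [h1, h2]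
          have h4 := Finset.card_pos.mpr ⟨i, this⟩
          exact absurd (h4.trans_le hcard) (lt_irrefl 0)
        · omega
    rwa [this] at hreach
  | succ n ih =>
    intro y hy hreach hcard
    by_cases hemp : (Finset.univ.filter (fun i => y i = -1 ∧ fplus u x i = 1)) = ∅
    · have hyub := le_fplus (u := u) hy hreach
      have : y = fplus u x := by
        funext i
        rcases hy i with h1 | h1
        · have h3 : y i ≤ fplus u x i := hyub i
          rcases fplus_conf u x i with h2 | h2 <;> omega
        · by_contra hne
          rcases fplus_conf u x i with h2 | h2
          · have : i ∈ Finset.univ.filter (fun i => y i = -1 ∧ fplus u x i = 1) := by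
              simp [h1, h2]
            rw [hemp] at this
            simp at this
          · omega
      rwa [this] at hreach
    · obtain ⟨i, hi⟩ := Finset.nonempty_iff_ne_empty.mpr hemp
      simp only [Finset.mem_filter, Finset.mem_univ, true_and] at hi
      obtain ⟨hyi, hfi⟩ := hi
      have hz : ∃ z, MonReach u x z ∧ z i = 1 := by
        by_contra hno
        simp only [fplus, if_neg hno] at hfi
        omega
      obtain ⟨z, hzr, hzi⟩ := hz
      have hjoin := mon_join hsm hzr hx hy (monReach_le hreach)
      set y' := fun j => max (y j) (z j) with hy'
      have hy'C : Conf y' := by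
        intro j
        rcases hy j with h1 | h1 <;> rcases conf_monReach hx hzr j with h2 | h2 <;>
          simp [hy', h1, h2]
      have hreach' : MonReach u x y' := hreach.trans hjoin
      have hsub : (Finset.univ.filter (fun j => y' j = -1 ∧ fplus u x j = 1)) ⊂
          (Finset.univ.filter (fun j => y j = -1 ∧ fplus u x j = 1)) := by
        constructor
        · intro j hj
          simp only [Finset.mem_filter, Finset.mem_univ, true_and] at hj ⊢
          refine ⟨?_, hj.2⟩
          have : y j ≤ y' j := le_max_left _ _
          have := hj.1
          rcases hy j with h1 | h1 <;> omega
        · intro hcon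
          have hmem : i ∈ Finset.univ.filter (fun j => y j = -1 ∧ fplus u x j = 1) := by
            simp [hyi, hfi]
          have := hcon hmem
          simp only [Finset.mem_filter, Finset.mem_univ, true_and] at this
          have : y' i = -1 := this.1
          simp [hy', hzi] at this
          omega
      have hlt := Finset.card_lt_card hsub
      exact ih y' hy'C hreach' (Nat.lt_succ_iff.mp (lt_of_lt_of_le hlt hcard))

lemma reach_fminus (hsm : Supermodular u) {x : V → ℤ} (hx : Conf x) :
    AntiReach u x (fminus u x) := by
  classical
  suffices H : ∀ n (y : V → ℤ), Conf y → AntiReach u x y →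
      (Finset.univ.filter (fun i => y i = 1 ∧ fminus u x i = -1)).card ≤ n →
      AntiReach u x (fminus u x) by
    exact H (Finset.univ.filter (fun i => x i = 1 ∧ fminus u x i = -1)).card x hx
      Relation.ReflTransGen.refl le_rfl
  intro n
  induction n with
  | zero =>
    intro y hy hreach hcard
    have hyub := fminus_le (u := u) hy hreach
    have : y = fminus u x := by
      funext i
      rcases hy i with h1 | h1
      · by_contra hne
        rcases fminus_conf u x i with h2 | h2
        · omega
        · have : i ∈ Finset.univ.filter (fun i => y i = 1 ∧ fminus u x i = -1) := by
            simp [h1, h2]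
          have h4 := Finset.card_pos.mpr ⟨i, this⟩
          exact absurd (h4.trans_le hcard) (lt_irrefl 0)
      · have h3 : fminus u x i ≤ y i := hyub i
        rcases fminus_conf u x i with h2 | h2 <;> omega
    rwa [this] at hreach
  | succ n ih =>
    intro y hy hreach hcard
    by_cases hemp : (Finset.univ.filter (fun i => y i = 1 ∧ fminus u x i = -1)) = ∅
    · have hyub := fminus_le (u := u) hy hreach
      have : y = fminus u x := by
        funext i
        rcases hy i with h1 | h1
        · by_contra hne
          rcases fminus_conf u x i with h2 | h2
          · omega
          · have : i ∈ Finset.univ.filter (fun i => y i = 1 ∧ fminus u x i = -1) := by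
              simp [h1, h2]
            rw [hemp] at this
            simp at this
        · have h3 : fminus u x i ≤ y i := hyub i
          rcases fminus_conf u x i with h2 | h2 <;> omega
      rwa [this] at hreach
    · obtain ⟨i, hi⟩ := Finset.nonempty_iff_ne_empty.mpr hemp
      simp only [Finset.mem_filter, Finset.mem_univ, true_and] at hi
      obtain ⟨hyi, hfi⟩ := hi
      have hz : ∃ z, AntiReach u x z ∧ z i = -1 := by
        by_contra hno
        simp only [fminus, if_neg hno] at hfi
        omega
      obtain ⟨z, hzr, hzi⟩ := hz
      have hjoin := anti_meet hsm hzr hx hy (antiReach_le hreach)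
      set y' := fun j => min (y j) (z j) with hy'
      have hy'C : Conf y' := by
        intro j
        rcases hy j with h1 | h1 <;> rcases conf_antiReach hx hzr j with h2 | h2 <;>
          simp [hy', h1, h2]
      have hreach' : AntiReach u x y' := hreach.trans hjoin
      have hsub : (Finset.univ.filter (fun j => y' j = 1 ∧ fminus u x j = -1)) ⊂
          (Finset.univ.filter (fun j => y j = 1 ∧ fminus u x j = -1)) := by
        constructor
        · intro j hj
          simp only [Finset.mem_filter, Finset.mem_univ, true_and] at hj ⊢
          refine ⟨?_, hj.2⟩
          have : y' j ≤ y j := min_le_left _ _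
          have := hj.1
          rcases hy j with h1 | h1 <;> omega
        · intro hcon
          have hmem : i ∈ Finset.univ.filter (fun j => y j = 1 ∧ fminus u x j = -1) := by
            simp [hyi, hfi]
          have := hcon hmem
          simp only [Finset.mem_filter, Finset.mem_univ, true_and] at this
          have : y' i = 1 := this.1
          simp [hy', hzi] at this
          omega
      have hlt := Finset.card_lt_card hsub
      exact ih y' hy'C hreach' (Nat.lt_succ_iff.mp (lt_of_lt_of_le hlt hcard))


def NoUp (u : V → (V → ℤ) → ℝ) (w : V → ℤ) : Prop :=
  ∀ i, w i = -1 → u i (Function.update w i 1) ≤ u i w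

def NoDown (u : V → (V → ℤ) → ℝ) (w : V → ℤ) : Prop :=
  ∀ i, w i = 1 → u i (Function.update w i (-1)) ≤ u i w

lemma fplus_noUp (hsm : Supermodular u) {x : V → ℤ} (hx : Conf x) : NoUp u (fplus u x) := by
  intro i hi
  by_contra hlt
  push_neg at hlt
  nth_rewrite 1 [← update_eq_self_of_eq hi] at hlt
  have hstep := monStep_intro hi hlt
  have hreach := (reach_fplus hsm hx).tail hstep
  have hub := le_fplus (conf_update (fplus_conf u x) (Or.inl rfl)) hreach
  have h2 : Function.update (fplus u x) i 1 i ≤ fplus u x i := hub i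
  rw [Function.update_self, hi] at h2
  omega

lemma fminus_noDown (hsm : Supermodular u) {x : V → ℤ} (hx : Conf x) :
    NoDown u (fminus u x) := by
  intro i hi
  by_contra hlt
  push_neg at hlt
  nth_rewrite 1 [← update_eq_self_of_eq hi] at hlt
  have hstep := antiStep_intro hi hlt
  have hreach := (reach_fminus hsm hx).tail hstep
  have hub := fminus_le (conf_update (fminus_conf u x) (Or.inr rfl)) hreach
  have h2 : fminus u x i ≤ Function.update (fminus u x) i (-1) i := hub i
  rw [Function.update_self, hi] at h2
  omega

lemma noUp_antiStep (hsm : Supermodular u) {w w' : V → ℤ} (hw : Conf w)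
    (hP : NoUp u w) (h : AntiStep u w w') : NoUp u w' := by
  obtain ⟨k, hk, hw', hlt⟩ := antiStep_elim hw h
  have hw'C : Conf w' := hw' ▸ conf_update hw (Or.inr rfl)
  intro i hi
  by_cases hik : i = k
  · subst hik
    rw [hw', Function.update_idem]
    exact le_of_lt hlt
  · have hwi : w i = -1 := by
      have : w' i = w i := by rw [hw', Function.update_of_ne hik]
      omega
    have hPi := hP i hwi
    nth_rewrite 2 [← update_eq_self_of_eq hwi] at hPi
    have hle : ∀ j, j ≠ i → w' j ≤ w j := by
      intro j _
      by_cases hjk : j = k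
      · subst hjk; rw [hw', Function.update_self]; omega
      · rw [hw', Function.update_of_ne hjk]
    have := hsm i w w' hw hw'C hle
    conv_rhs => rw [← update_eq_self_of_eq hi]
    linarith

lemma noDown_monStep (hsm : Supermodular u) {w w' : V → ℤ} (hw : Conf w)
    (hQ : NoDown u w) (h : MonStep u w w') : NoDown u w' := by
  obtain ⟨k, hk, hw', hlt⟩ := monStep_elim hw h
  have hw'C : Conf w' := hw' ▸ conf_update hw (Or.inl rfl)
  intro i hi
  by_cases hik : i = k
  · subst hik
    rw [hw', Function.update_idem]
    exact le_of_lt hlt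
  · have hwi : w i = 1 := by
      have : w' i = w i := by rw [hw', Function.update_of_ne hik]
      omega
    have hQi := hQ i hwi
    nth_rewrite 2 [← update_eq_self_of_eq hwi] at hQi
    have hle : ∀ j, j ≠ i → w j ≤ w' j := by
      intro j _
      by_cases hjk : j = k
      · subst hjk; rw [hw', Function.update_self]; omega
      · rw [hw', Function.update_of_ne hjk]
    have := hsm i w' w hw'C hw hle
    conv_rhs => rw [← update_eq_self_of_eq hi]
    linarith

lemma noUp_antiReach (hsm : Supermodular u) {w w' : V → ℤ} (hw : Conf w)
    (hP : NoUp u w) (h : AntiReach u w w') : NoUp u w' := by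
  induction h with
  | refl => exact hP
  | tail hbc hstep ih =>
    exact noUp_antiStep hsm (conf_antiReach hw hbc) ih hstep

lemma noDown_monReach (hsm : Supermodular u) {w w' : V → ℤ} (hw : Conf w)
    (hQ : NoDown u w) (h : MonReach u w w') : NoDown u w' := by
  induction h with
  | refl => exact hQ
  | tail hbc hstep ih =>
    exact noDown_monStep hsm (conf_monReach hw hbc) ih hstep

lemma isNash_of_noUp_noDown {z : V → ℤ} (hz : Conf z) (hP : NoUp u z) (hQ : NoDown u z) :
    IsNash u z := by
  intro i
  rcases hz i with h1 | h1
  · have : -(z i) = -1 := by rw [h1]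
    rw [this]
    exact hQ i h1
  · have : -(z i) = 1 := by rw [h1]; norm_num
    rw [this]
    exact hP i h1

lemma impReach_le_fplus (hsm : Supermodular u) {x z : V → ℤ} (hx : Conf x)
    (h : ImpReach u x z) : z ≤ fplus u x := by
  induction h with
  | refl => exact le_fplus hx Relation.ReflTransGen.refl
  | @tail b c hbc hstep ih =>
    have hb : Conf b := conf_impReach hx hbc
    obtain ⟨i, hc, hlt⟩ := hstep
    have hfC := fplus_conf u x
    rcases hb i with h1 | h1
    · intro j
      show c j ≤ fplus u x j
      by_cases hj : j = i
      · subst hj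
        rw [hc, h1]
        simp only [Function.update_self]
        rcases hfC j with h2 | h2 <;> omega
      · rw [hc, Function.update_of_ne hj]
        exact ih j
    · have hc' : c = Function.update b i 1 := by rw [hc, h1]; norm_num
      have hfi : fplus u x i = 1 := by
        by_contra hne
        have hfi : fplus u x i = -1 := (hfC i).resolve_left hne
        have hlt2 : u i (Function.update b i (-1)) < u i (Function.update b i 1) := by
          rw [hc'] at hlt
          nth_rewrite 1 [← update_eq_self_of_eq h1] at hlt
          exact hlt
        have himp := sup_up hsm hb hfC (fun j _ => ih j) hlt2
        have hnoup := fplus_noUp hsm hx i hfi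
        nth_rewrite 2 [← update_eq_self_of_eq hfi] at hnoup
        linarith
      intro j
      show c j ≤ fplus u x j
      by_cases hj : j = i
      · subst hj
        rw [hc', Function.update_self, hfi]
      · rw [hc', Function.update_of_ne hj]
        exact ih j

lemma fminus_le_impReach (hsm : Supermodular u) {x z : V → ℤ} (hx : Conf x)
    (h : ImpReach u x z) : fminus u x ≤ z := by
  induction h with
  | refl => exact fminus_le hx Relation.ReflTransGen.refl
  | @tail b c hbc hstep ih =>
    have hb : Conf b := conf_impReach hx hbc
    obtain ⟨i, hc, hlt⟩ := hstep
    have hfC := fminus_conf u x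
    rcases hb i with h1 | h1
    · have hc' : c = Function.update b i (-1) := by rw [hc, h1]
      have hfi : fminus u x i = -1 := by
        by_contra hne
        have hfi : fminus u x i = 1 := (hfC i).resolve_right hne
        have hlt2 : u i (Function.update b i 1) < u i (Function.update b i (-1)) := by
          rw [hc'] at hlt
          nth_rewrite 1 [← update_eq_self_of_eq h1] at hlt
          exact hlt
        have himp := sup_down hsm hb hfC (fun j _ => ih j) hlt2
        have hnodown := fminus_noDown hsm hx i hfi
        nth_rewrite 2 [← update_eq_self_of_eq hfi] at hnodown
        linarith
      intro j
      show fminus u x j ≤ c j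
      by_cases hj : j = i
      · subst hj
        rw [hc', Function.update_self, hfi]
      · rw [hc', Function.update_of_ne hj]
        exact ih j
    · intro j
      show fminus u x j ≤ c j
      by_cases hj : j = i
      · subst hj
        rw [hc, h1]
        simp only [Function.update_self]
        rcases hfC j with h2 | h2 <;> omega
      · rw [hc, Function.update_of_ne hj]
        exact ih j

lemma nash_le_fminus (hsm : Supermodular u) {a z : V → ℤ} (ha : Conf a) (hz : Conf z)
    (hN : IsNash u z) (hle : z ≤ a) : z ≤ fminus u a := by
  suffices H : ∀ w, AntiReach u a w → z ≤ w from H _ (reach_fminus hsm ha)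
  intro w hw
  induction hw with
  | refl => exact hle
  | @tail b c hbc hstep ih =>
    have hb : Conf b := conf_antiReach ha hbc
    obtain ⟨k, hk, hc, hlt⟩ := antiStep_elim hb hstep
    intro j
    show z j ≤ c j
    by_cases hj : j = k
    · subst hj
      rw [hc, Function.update_self]
      rcases hz j with h1 | h1
      · exfalso
        have hsmj := hsm j b z hb hz (fun l _ => ih l)
        have hNj := hN j
        have hneg : -(z j) = -1 := by rw [h1]
        rw [hneg] at hNj
        nth_rewrite 2 [← update_eq_self_of_eq h1] at hNj
        linarith
      · omega
    · rw [hc, Function.update_of_ne hj]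
      exact ih j

lemma nash_ge_fplus (hsm : Supermodular u) {a z : V → ℤ} (ha : Conf a) (hz : Conf z)
    (hN : IsNash u z) (hle : a ≤ z) : fplus u a ≤ z := by
  suffices H : ∀ w, MonReach u a w → w ≤ z from H _ (reach_fplus hsm ha)
  intro w hw
  induction hw with
  | refl => exact hle
  | @tail b c hbc hstep ih =>
    have hb : Conf b := conf_monReach ha hbc
    obtain ⟨k, hk, hc, hlt⟩ := monStep_elim hb hstep
    intro j
    show c j ≤ z j
    by_cases hj : j = k
    · subst hj
      rw [hc, Function.update_self]
      rcases hz j with h1 | h1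
      · omega
      · exfalso
        have hsmj := hsm j z b hz hb (fun l _ => ih l)
        have hNj := hN j
        have hneg : -(z j) = 1 := by rw [h1]; norm_num
        rw [hneg] at hNj
        nth_rewrite 2 [← update_eq_self_of_eq h1] at hNj
        linarith
    · rw [hc, Function.update_of_ne hj]
      exact ih j

end Aux

/-- `fminus u (fplus u x)` is the greatest Nash equilibrium
reachable from `x` by an improvement path, and `fplus u (fminus u x)` is the
least one. -/
theorem extremal_reachable_nash (u : V → (V → ℤ) → ℝ) (hsm : Supermodular u)
    (x : V → ℤ) (hx : Conf x) :
    (IsNash u (fminus u (fplus u x)) ∧ ImpReach u x (fminus u (fplus u x)) ∧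
      ∀ z, IsNash u z → ImpReach u x z → z ≤ fminus u (fplus u x)) ∧
    (IsNash u (fplus u (fminus u x)) ∧ ImpReach u x (fplus u (fminus u x)) ∧
      ∀ z, IsNash u z → ImpReach u x z → fplus u (fminus u x) ≤ z) := by

  have haC : Conf (fplus u x) := fplus_conf u x
  have hbC : Conf (fminus u (fplus u x)) := fminus_conf u (fplus u x)
  have ha'C : Conf (fminus u x) := fminus_conf u x
  have hb'C : Conf (fplus u (fminus u x)) := fplus_conf u (fminus u x)
  constructor
  · have hNash : IsNash u (fminus u (fplus u x)) := by
      refine isNash_of_noUp_noDown hbC ?_ ?_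
      · exact noUp_antiReach hsm haC (fplus_noUp hsm hx) (reach_fminus hsm haC)
      · exact fminus_noDown hsm haC
    refine ⟨hNash, ?_, ?_⟩
    · exact (monReach_impReach (reach_fplus hsm hx)).trans
        (antiReach_impReach (reach_fminus hsm haC))
    · intro z hzN hzR
      have hzC : Conf z := conf_impReach hx hzR
      exact nash_le_fminus hsm haC hzC hzN (impReach_le_fplus hsm hx hzR)
  · have hNash : IsNash u (fplus u (fminus u x)) := by
      refine isNash_of_noUp_noDown hb'C ?_ ?_
      · exact fplus_noUp hsm ha'C
      · exact noDown_monReach hsm ha'C (fminus_noDown hsm hx) (reach_fplus hsm ha'C)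
    refine ⟨hNash, ?_, ?_⟩
    · exact (antiReach_impReach (reach_fminus hsm hx)).trans
        (monReach_impReach (reach_fplus hsm ha'C))
    · intro z hzN hzR
      have hzC : Conf z := conf_impReach hx hzR
      exact nash_ge_fplus hsm ha'C hzC hzN (fminus_le_impReach hsm hx hzR)
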